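/- For any prime p and natural numbers j, k with j + k ≤ p^a - 1 (a a positive integer), the ratio of binomial coefficients C(p^a - 1 - k, j) / C(-1-k, j) is congruent to 1 modulo p; equivalently, C(p^a - 1 - k, j) ≡ (-1)^j · C(j + k, j) (mod p). -/

import Mathlib

private lemma aux_single (p : ℕ) [hp : Fact p.Prime] (r : ℕ) (hr : r ≤ p - 1) :
    ((p - 1).choose r : ZMod p) = (-1) ^ r := by
  have hp2 := hp.out.two_le
  induction r with
  | zero => simp
  | succ r ih =>
    have hr' : r ≤ p - 1 := le_of_lt hr
    have key := congrArg (Nat.cast : ℕ → ZMod p) (Nat.choose_succ_right_eq (p - 1) r)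
    push_cast at key
    have hcast : ((p - 1 - r : ℕ) : ZMod p) = -((r : ZMod p) + 1) := by
      have h1 : p - 1 - r + (r + 1) = p := by omega
      have h2 := congrArg (Nat.cast : ℕ → ZMod p) h1
      push_cast at h2
      rw [ZMod.natCast_self] at h2
      linear_combination h2
    have hunit : ((r : ZMod p) + 1) ≠ 0 := by
      have : (((r + 1 : ℕ)) : ZMod p) ≠ 0 := by
        rw [Ne, ZMod.natCast_eq_zero_iff]
        exact Nat.not_dvd_of_pos_of_lt (Nat.succ_pos r) (by omega)
      push_cast at this
      exact this
    apply mul_right_cancel₀ hunit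
    rw [key, ih hr', hcast]
    ring

private lemma aux_pow (p : ℕ) [hp : Fact p.Prime] (a : ℕ) (m : ℕ) (hm : m ≤ p ^ a - 1) :
    ((p ^ a - 1).choose m : ZMod p) = (-1) ^ m := by
  have hp2 := hp.out.two_le
  induction a generalizing m with
  | zero =>
    have hm0 : m = 0 := by simpa using hm
    subst hm0
    simp
  | succ a ih =>
    have hpa : 0 < p ^ a := pow_pos (by omega) a
    have hpa1 : 0 < p ^ (a + 1) := pow_pos (by omega) (a + 1)
    have hrep : p ^ (a + 1) - 1 = p * (p ^ a - 1) + (p - 1) := by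
      have h1 : p ^ (a + 1) = p * p ^ a := by rw [pow_succ, mul_comm]
      have h2 : p * (p ^ a - 1) = p * p ^ a - p := by rw [Nat.mul_sub, mul_one]
      have h3 : p ≤ p * p ^ a := Nat.le_mul_of_pos_right p hpa
      omega
    have hmod : (p ^ (a + 1) - 1) % p = p - 1 := by
      rw [hrep, Nat.mul_add_mod, Nat.mod_eq_of_lt (by omega)]
    have hdiv : (p ^ (a + 1) - 1) / p = p ^ a - 1 := by
      rw [hrep, Nat.mul_add_div (by omega), Nat.div_eq_of_lt (by omega), Nat.add_zero]
    have lucas := Choose.choose_modEq_choose_mod_mul_choose_div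
      (n := p ^ (a + 1) - 1) (k := m) (p := p)
    rw [← ZMod.intCast_eq_intCast_iff] at lucas
    push_cast at lucas
    rw [lucas, hmod, hdiv]
    rw [aux_single p (m % p) (by have := Nat.mod_lt m (show 0 < p by omega); omega),
      ih (m / p) (by
        have := Nat.div_le_div_right (c := p) (Nat.sub_le_sub_right (le_refl (p ^ (a+1))) 1)
        calc m / p ≤ (p ^ (a + 1) - 1) / p := Nat.div_le_div_right (by omega)
        _ = p ^ a - 1 := hdiv)]
    have hm' : m = p * (m / p) + m % p := (Nat.div_add_mod m p).symm.trans (by ring)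
    conv_rhs => rw [hm']
    rw [pow_add, pow_mul, neg_one_pow_char (R := ZMod p) (p := p)]
    ring

/-- For a prime `p`, `a ≥ 1`, and `j + k ≤ p^a - 1`, one has
`C(p^a-1-k, j) ≡ (-1)^j · C(j+k, j) (mod p)`, i.e. `C(p^a-1-k,j)/C(-1-k,j) ≡ 1 (mod p)`. -/
theorem choose_pow_sub_one_congr (p : ℕ) [Fact p.Prime] (a : ℕ) (ha : 0 < a) (j k : ℕ)
    (hjk : j + k ≤ p ^ a - 1) :
    ((p ^ a - 1 - k).choose j : ℤ) ≡ (-1) ^ j * ((j + k).choose j : ℤ) [ZMOD p] := by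
  rw [← ZMod.intCast_eq_intCast_iff]
  push_cast
  have hkn : j + k ≤ p ^ a - 1 := hjk
  have key := congrArg (Nat.cast : ℕ → ZMod p)
    (Nat.choose_mul (n := p ^ a - 1) (k := j + k) (s := k) (Nat.le_add_left k j))
  push_cast at key
  rw [Nat.add_sub_cancel] at key
  -- key : C(n, j+k) * C(j+k, k) = C(n, k) * C(n - k, j)
  rw [aux_pow p a (j + k) hjk, aux_pow p a k (by omega)] at key
  have hsymm : (j + k).choose k = (j + k).choose j := by
    rw [← Nat.choose_symm (Nat.le_add_left k j)]
    congr 1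
    omega
  rw [hsymm] at key
  have hneg : ((-1 : ZMod p)) ^ k * (-1) ^ k = 1 := by
    rw [← pow_add, ← two_mul, pow_mul, neg_one_sq, one_pow]
  calc ((p ^ a - 1 - k).choose j : ZMod p)
      = (-1) ^ k * (-1) ^ k * ((p ^ a - 1 - k).choose j : ZMod p) := by rw [hneg, one_mul]
    _ = (-1) ^ k * ((-1) ^ (j + k) * ((j + k).choose j : ZMod p)) := by rw [mul_assoc, ← key]
    _ = ((-1) ^ k * (-1) ^ k) * ((-1) ^ j * ((j + k).choose j : ZMod p)) := by
        rw [pow_add]; ring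
    _ = (-1) ^ j * ((j + k).choose j : ZMod p) := by rw [hneg, one_mul]
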